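/- Let (A,∘,α,β) be a BiHom-pre-Lie superalgebra with α,β bijective and let R be a Rota-Baxter operator of weight zero on it. Define x ∗ y = R(x)∘y − (−1)^{|x||y|}(α⁻¹β(y))∘R(αβ⁻¹(x)) for homogeneous x,y. Then (A,∗,α,β) is a BiHom-pre-Lie superalgebra and R is a Rota-Baxter operator of weight zero on (A,∗,α,β). -/

import Mathlib

/-!
STATEMENT 4: If `R` is a Rota-Baxter operator of weight zero on a BiHom-pre-Lie
superalgebra `(A,∘,α,β)` (with `α, β` bijective), then
`x ∗ y = R(x)∘y − (−1)^{|x||y|}(α⁻¹β(y))∘R(αβ⁻¹(x))` makes `(A,∗,α,β)` a BiHom-pre-Lie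
superalgebra and `R` is a Rota-Baxter operator of weight zero on `(A,∗,α,β)`.
-/
set_option maxHeartbeats 4000000 in
theorem statement4
    (K : Type) [Field K] [CharZero K]
    (A : Type) [AddCommGroup A] [Module K A]
    (𝒜 : ZMod 2 → Submodule K A)
    (hA : DirectSum.IsInternal 𝒜)
    (c : A →ₗ[K] A →ₗ[K] A)
    (α β : A ≃ₗ[K] A)
    (hcomm : ∀ a, α (β a) = β (α a))
    (hαe : ∀ i : ZMod 2, ∀ a ∈ 𝒜 i, α a ∈ 𝒜 i)
    (hβe : ∀ i : ZMod 2, ∀ a ∈ 𝒜 i, β a ∈ 𝒜 i)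
    (hce : ∀ i j : ZMod 2, ∀ x ∈ 𝒜 i, ∀ y ∈ 𝒜 j, c x y ∈ 𝒜 (i + j))
    (hαm : ∀ a b : A, α (c a b) = c (α a) (α b))
    (hβm : ∀ a b : A, β (c a b) = c (β a) (β b))
    (hpre : ∀ i j k : ZMod 2, ∀ x ∈ 𝒜 i, ∀ y ∈ 𝒜 j, ∀ z ∈ 𝒜 k,
      c (c (β x) (α y)) (β z) - c (α (β x)) (c (α y) z)
        = ((-1 : K) ^ (i.val * j.val)) •
            (c (c (β y) (α x)) (β z) - c (α (β y)) (c (α x) z)))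
    -- R is a Rota-Baxter operator of weight zero
    (R : A →ₗ[K] A)
    (hRe : ∀ i : ZMod 2, ∀ a ∈ 𝒜 i, R a ∈ 𝒜 i)
    (hRα : ∀ a, R (α a) = α (R a))
    (hRβ : ∀ a, R (β a) = β (R a))
    (hRB : ∀ i j : ZMod 2, ∀ x ∈ 𝒜 i, ∀ y ∈ 𝒜 j,
      c (R x) (R y) = R (c (R x) y + c x (R y)))
    -- the new product `∗` (on homogeneous elements of parities `i`, `j`)
    (st : ZMod 2 → ZMod 2 → A → A → A)
    (hst : ∀ i j x y, st i j x y
      = c (R x) y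
        - ((-1 : K) ^ (i.val * j.val)) • c (α.symm (β y)) (R (α (β.symm x)))) :
    -- `(A,∗,α,β)` is a BiHom-pre-Lie superalgebra:
    (∀ i j : ZMod 2, ∀ x ∈ 𝒜 i, ∀ y ∈ 𝒜 j, st i j x y ∈ 𝒜 (i + j))
    ∧ (∀ i j : ZMod 2, ∀ x ∈ 𝒜 i, ∀ y ∈ 𝒜 j, α (st i j x y) = st i j (α x) (α y))
    ∧ (∀ i j : ZMod 2, ∀ x ∈ 𝒜 i, ∀ y ∈ 𝒜 j, β (st i j x y) = st i j (β x) (β y))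
    ∧ (∀ i j k : ZMod 2, ∀ x ∈ 𝒜 i, ∀ y ∈ 𝒜 j, ∀ z ∈ 𝒜 k,
        st (i + j) k (st i j (β x) (α y)) (β z)
          - st i (j + k) (α (β x)) (st j k (α y) z)
          = ((-1 : K) ^ (i.val * j.val)) •
              (st (j + i) k (st j i (β y) (α x)) (β z)
                - st j (i + k) (α (β y)) (st i k (α x) z)))
    -- and R is a Rota-Baxter operator of weight zero on `(A,∗,α,β)`:
    ∧ (∀ i j : ZMod 2, ∀ x ∈ 𝒜 i, ∀ y ∈ 𝒜 j,
        st i j (R x) (R y) = R (st i j (R x) y + st i j x (R y))) := by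
  have hasc : ∀ a b : A, α.symm (c a b) = c (α.symm a) (α.symm b) := fun a b =>
    α.injective (by simp [hαm])
  have hbsc : ∀ a b : A, β.symm (c a b) = c (β.symm a) (β.symm b) := fun a b =>
    β.injective (by simp [hβm])
  have hRa : ∀ a, α (R a) = R (α a) := fun a => (hRα a).symm
  have hRb : ∀ a, β (R a) = R (β a) := fun a => (hRβ a).symm
  have hRas : ∀ a, α.symm (R a) = R (α.symm a) := fun a => α.injective (by simp [hRa])
  have hRbs : ∀ a, β.symm (R a) = R (β.symm a) := fun a => β.injective (by simp [hRb])
  have hab2 : ∀ a, α (β.symm a) = β.symm (α a) := fun a => β.injective (by simp [← hcomm])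
  have hab3 : ∀ a, α.symm (β a) = β (α.symm a) := fun a => α.injective (by simp [hcomm])
  have hab4 : ∀ a, α.symm (β.symm a) = β.symm (α.symm a) := fun a => α.injective (by simp [hab2])
  have hex : ∀ m : ZMod 2, m = 0 ∨ m = 1 := by decide
  have hdisj : Disjoint (𝒜 0) (𝒜 1) :=
    hA.submodule_iSupIndep.pairwiseDisjoint (by decide)
  have htop : ∀ b : A, ∃ b0 ∈ 𝒜 0, ∃ b1 ∈ 𝒜 1, b0 + b1 = b := by
    intro b
    have h1 : (⨆ m, 𝒜 m) = 𝒜 0 ⊔ 𝒜 1 := by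
      apply le_antisymm
      · apply iSup_le; intro m; rcases hex m with rfl | rfl
        · exact le_sup_left
        · exact le_sup_right
      · exact sup_le (le_iSup 𝒜 0) (le_iSup 𝒜 1)
    have hb : b ∈ 𝒜 0 ⊔ 𝒜 1 := by
      rw [← h1, hA.submodule_iSup_eq_top]; trivial
    exact Submodule.mem_sup.mp hb
  have hsymm : ∀ (e : A ≃ₗ[K] A), (∀ m, ∀ a ∈ 𝒜 m, e a ∈ 𝒜 m) →
      ∀ m, ∀ a ∈ 𝒜 m, e.symm a ∈ 𝒜 m := by
    intro e he m a ha
    obtain ⟨b0, h0, b1, h1, hsum⟩ := htop (e.symm a)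
    have hb : e b0 + e b1 = a := by
      rw [← map_add, hsum, e.apply_symm_apply]
    rcases hex m with rfl | rfl
    · have hmem : e b1 ∈ 𝒜 0 := by
        have h' : e b1 = a - e b0 := by rw [← hb]; abel
        rw [h']; exact Submodule.sub_mem _ ha (he 0 _ h0)
      have hz : b1 = 0 := e.injective (by
        rw [map_zero]
        exact Submodule.disjoint_def.mp hdisj _ hmem (he 1 _ h1))
      rw [← hsum, hz, add_zero]; exact h0
    · have hmem : e b0 ∈ 𝒜 1 := by
        have h' : e b0 = a - e b1 := by rw [← hb]; abel
        rw [h']; exact Submodule.sub_mem _ ha (he 1 _ h1)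
      have hz : b0 = 0 := e.injective (by
        rw [map_zero]
        exact Submodule.disjoint_def.mp hdisj _ (he 0 _ h0) hmem)
      rw [← hsum, hz, zero_add]; exact h1
  have hαse := hsymm α hαe
  have hβse := hsymm β hβe
  have k1 : ∀ a b cc : ℕ, ((-1:K))^(((a+b)%2)*cc) = (-1)^(a*cc) * (-1)^(b*cc) := by
    intro a b cc
    rw [pow_mul, ← neg_one_pow_eq_pow_mod_two, pow_add, mul_pow, ← pow_mul, ← pow_mul]
  have k2 : ∀ a b cc : ℕ, ((-1:K))^(a*((b+cc)%2)) = (-1)^(a*b) * (-1)^(a*cc) := by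
    intro a b cc
    rw [Nat.mul_comm a, k1, Nat.mul_comm b a, Nat.mul_comm cc a]
  refine ⟨?_, ?_, ?_, ?_, ?_⟩
  · intro i j x hx y hy
    rw [hst]
    refine Submodule.sub_mem _ (hce i j _ (hRe _ _ hx) _ hy) (Submodule.smul_mem _ _ ?_)
    have h := hce j i _ (hαse _ _ (hβe _ _ hy)) _ (hRe _ _ (hαe _ _ (hβse _ _ hx)))
    rwa [add_comm] at h
  · intro i j x hx y hy
    rw [hst, hst]
    simp only [map_add, map_sub, map_smul, LinearMap.add_apply, LinearMap.sub_apply, LinearMap.smul_apply, smul_sub, smul_add, hαm, hβm, hasc, hbsc, hRa, hRb, hRas, hRbs, hcomm, hab2, hab3, hab4, LinearEquiv.apply_symm_apply, LinearEquiv.symm_apply_apply]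
  · intro i j x hx y hy
    rw [hst, hst]
    simp only [map_add, map_sub, map_smul, LinearMap.add_apply, LinearMap.sub_apply, LinearMap.smul_apply, smul_sub, smul_add, hαm, hβm, hasc, hbsc, hRa, hRb, hRas, hRbs, hcomm, hab2, hab3, hab4, LinearEquiv.apply_symm_apply, LinearEquiv.symm_apply_apply]
  · intro i j k x hx y hy z hz
    have b1 := hRB i j (β x) (hβe _ _ hx) (α y) (hαe _ _ hy)
    have b2 := hRB j i (β y) (hβe _ _ hy) (α x) (hαe _ _ hx)
    have b3 := hRB i j (α x) (hαe _ _ hx) (α (α (β.symm y)))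
      (hαe _ _ (hαe _ _ (hβse _ _ hy)))
    have b4 := hRB j i (α y) (hαe _ _ hy) (α (α (β.symm x)))
      (hαe _ _ (hαe _ _ (hβse _ _ hx)))
    have cb1 := congrArg (fun t => c t (β z)) b1
    have cb2 := congrArg (fun t => c t (β z)) b2
    have cb3 := congrArg (fun t => c (α.symm (β (β z))) t) b3
    have cb4 := congrArg (fun t => c (α.symm (β (β z))) t) b4
    have p1 := hpre i j k (R x) (hRe _ _ hx) (R y) (hRe _ _ hy) z hz
    have p2 := hpre i k j (R x) (hRe _ _ hx) (α.symm (α.symm (β z)))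
      (hαse _ _ (hαse _ _ (hβe _ _ hz)))
      (α (α (β.symm (R y)))) (hαe _ _ (hαe _ _ (hβse _ _ (hRe _ _ hy))))
    have p3 := hpre j k i (R y) (hRe _ _ hy) (α.symm (α.symm (β z)))
      (hαse _ _ (hαse _ _ (hβe _ _ hz)))
      (α (α (β.symm (R x)))) (hαe _ _ (hαe _ _ (hβse _ _ (hRe _ _ hx))))
    have hji : ((-1:K))^(ZMod.val j * ZMod.val i) = (-1)^(ZMod.val i * ZMod.val j) := by
      rw [Nat.mul_comm]
    simp only [hst]
    simp only [map_add, map_sub, map_smul, LinearMap.add_apply, LinearMap.sub_apply, LinearMap.smul_apply, smul_sub, smul_add, hαm, hβm, hasc, hbsc, hRa, hRb, hRas, hRbs, hcomm, hab2, hab3, hab4, LinearEquiv.apply_symm_apply, LinearEquiv.symm_apply_apply] at cb1 cb2 cb3 cb4 p1 p2 p3 ⊢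
    simp only [ZMod.val_add, k1, k2, hji]
    have e1d : ((-1:K))^(ZMod.val i * ZMod.val j) = 1 ∨
        ((-1:K))^(ZMod.val i * ZMod.val j) = -1 := by
      rcases Nat.even_or_odd (ZMod.val i * ZMod.val j) with h | h
      exacts [Or.inl (Even.neg_one_pow h), Or.inr (Odd.neg_one_pow h)]
    have e2d : ((-1:K))^(ZMod.val i * ZMod.val k) = 1 ∨
        ((-1:K))^(ZMod.val i * ZMod.val k) = -1 := by
      rcases Nat.even_or_odd (ZMod.val i * ZMod.val k) with h | h
      exacts [Or.inl (Even.neg_one_pow h), Or.inr (Odd.neg_one_pow h)]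
    have e3d : ((-1:K))^(ZMod.val j * ZMod.val k) = 1 ∨
        ((-1:K))^(ZMod.val j * ZMod.val k) = -1 := by
      rcases Nat.even_or_odd (ZMod.val j * ZMod.val k) with h | h
      exacts [Or.inl (Even.neg_one_pow h), Or.inr (Odd.neg_one_pow h)]
    rcases e1d with e1v | e1v
    · rcases e2d with e2v | e2v
      · rcases e3d with e3v | e3v
        · rw [e1v] at p1 ⊢; rw [e2v] at p2 ⊢; rw [e3v] at p3 ⊢
          linear_combination (norm := module) (-1:K) • cb1 + (1:K) • cb2 + (1:K) • cb3 + (-1:K) • cb4 + p1 + (-1:K) • p2 + (1:K) • p3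
        · rw [e1v] at p1 ⊢; rw [e2v] at p2 ⊢; rw [e3v] at p3 ⊢
          linear_combination (norm := module) (-1:K) • cb1 + (1:K) • cb2 + (-1:K) • cb3 + (1:K) • cb4 + p1 + (1:K) • p2 + (1:K) • p3
      · rcases e3d with e3v | e3v
        · rw [e1v] at p1 ⊢; rw [e2v] at p2 ⊢; rw [e3v] at p3 ⊢
          linear_combination (norm := module) (-1:K) • cb1 + (1:K) • cb2 + (-1:K) • cb3 + (1:K) • cb4 + p1 + (-1:K) • p2 + (-1:K) • p3
        · rw [e1v] at p1 ⊢; rw [e2v] at p2 ⊢; rw [e3v] at p3 ⊢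
          linear_combination (norm := module) (-1:K) • cb1 + (1:K) • cb2 + (1:K) • cb3 + (-1:K) • cb4 + p1 + (1:K) • p2 + (-1:K) • p3
    · rcases e2d with e2v | e2v
      · rcases e3d with e3v | e3v
        · rw [e1v] at p1 ⊢; rw [e2v] at p2 ⊢; rw [e3v] at p3 ⊢
          linear_combination (norm := module) (-1:K) • cb1 + (-1:K) • cb2 + (1:K) • cb3 + (1:K) • cb4 + p1 + (-1:K) • p2 + (-1:K) • p3
        · rw [e1v] at p1 ⊢; rw [e2v] at p2 ⊢; rw [e3v] at p3 ⊢
          linear_combination (norm := module) (-1:K) • cb1 + (-1:K) • cb2 + (-1:K) • cb3 + (-1:K) • cb4 + p1 + (1:K) • p2 + (-1:K) • p3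
      · rcases e3d with e3v | e3v
        · rw [e1v] at p1 ⊢; rw [e2v] at p2 ⊢; rw [e3v] at p3 ⊢
          linear_combination (norm := module) (-1:K) • cb1 + (-1:K) • cb2 + (-1:K) • cb3 + (-1:K) • cb4 + p1 + (-1:K) • p2 + (1:K) • p3
        · rw [e1v] at p1 ⊢; rw [e2v] at p2 ⊢; rw [e3v] at p3 ⊢
          linear_combination (norm := module) (-1:K) • cb1 + (-1:K) • cb2 + (1:K) • cb3 + (1:K) • cb4 + p1 + (1:K) • p2 + (1:K) • p3
  · intro i j x hx y hy
    have b1 := hRB i j (R x) (hRe _ _ hx) y hy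
    have b2 := hRB j i (α.symm (β y)) (hαse _ _ (hβe _ _ hy))
      (R (α (β.symm x))) (hRe _ _ (hαe _ _ (hβse _ _ hx)))
    simp only [hst]
    simp only [map_add, map_sub, map_smul, LinearMap.add_apply, LinearMap.sub_apply, LinearMap.smul_apply, smul_sub, smul_add, hαm, hβm, hasc, hbsc, hRa, hRb, hRas, hRbs, hcomm, hab2, hab3, hab4, LinearEquiv.apply_symm_apply, LinearEquiv.symm_apply_apply] at b1 b2 ⊢
    linear_combination (norm := module) b1 - ((-1:K)^(ZMod.val i * ZMod.val j)) • b2
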